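/- Let C = (C,≤,⊙,→,',0,1) be a commutative unsharp residuated poset and define the partial operation x + y := (x'⊙y')' (defined if and only if x ≤ y'). Then (C,+,',0,1) is an effect algebra. -/

import Mathlib

namespace Paper

variable {E : Type*}

/-- The lower cone `L(S)` of a subset w.r.t. an order relation. -/
def lcone (le : E → E → Prop) (S : Set E) : Set E := {x | ∀ y ∈ S, le x y}

/-- The upper cone `U(S)` of a subset w.r.t. an order relation. -/
def ucone (le : E → E → Prop) (S : Set E) : Set E := {x | ∀ y ∈ S, le y x}

/-- `S ≤ T` for subsets: every element of `S` is below every element of `T`. -/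
def setLE (le : E → E → Prop) (S T : Set E) : Prop := ∀ x ∈ S, ∀ y ∈ T, le x y

/-- Effect algebra axioms (E1)-(E4); the partial operation `+` is encoded via `Option`
(`add x y = some z` means `x + y` is defined with value `z`). -/
structure IsEffectAlgebra (add : E → E → Option E) (compl : E → E)
    (zero one : E) : Prop where
  /-- (E1) -/
  comm : ∀ x y, add x y = add y x
  /-- (E2) -/
  assoc : ∀ x y z, (add x y).bind (fun u => add u z) = (add y z).bind (fun v => add x v)
  /-- (E3): `x'` is the unique `u` with `x + u = 1`. -/
  compl_iff : ∀ x u, add x u = some one ↔ u = compl x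
  /-- (E4) -/
  one_add : ∀ x y, add one x = some y → x = zero

/-- The induced order: `x ≤ y` iff there is `z` with `x + z = y`. -/
def eaLe (add : E → E → Option E) (x y : E) : Prop := ∃ z, add x z = some y

/-- `x + A := {x + a : a ∈ A}`. -/
def addLSet (add : E → E → Option E) (x : E) (S : Set E) : Set E :=
  {z | ∃ a ∈ S, add x a = some z}

/-- `A + x := {a + x : a ∈ A}`. -/
def addRSet (add : E → E → Option E) (S : Set E) (x : E) : Set E :=
  {z | ∃ a ∈ S, add a x = some z}

/-- A monotonous effect algebra: for every `x` and nonempty `A`, `B`, if `A ∪ B ≤ x'`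
and `L(A) ≤ U(B)`, then `L(x + A) ≤ U(x + B)`. -/
def Monotonous (add : E → E → Option E) (compl : E → E) : Prop :=
  ∀ (x : E) (A B : Set E), A.Nonempty → B.Nonempty →
    (∀ a ∈ A ∪ B, eaLe add a (compl x)) →
    setLE (eaLe add) (lcone (eaLe add) A) (ucone (eaLe add) B) →
    setLE (eaLe add) (lcone (eaLe add) (addLSet add x A)) (ucone (eaLe add) (addLSet add x B))

/-- The multiplication `x ⊙ y := (x' + y')'` derived from an effect algebra
(defined iff `x' + y'` is, i.e. iff `x' ≤ y`). -/
def eaOdot (add : E → E → Option E) (compl : E → E) (x y : E) : Option E :=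
  (add (compl x) (compl y)).map compl

/-- The implication `x → y := x' + L(x,y)` derived from an effect algebra. -/
def eaImp (add : E → E → Option E) (compl : E → E) (x y : E) : Set E :=
  addLSet add (compl x) (lcone (eaLe add) {x, y})

/-- `S ⊙ y := {s ⊙ y : s ∈ S}`. -/
def odotLSet (odot : E → E → Option E) (S : Set E) (y : E) : Set E :=
  {w | ∃ s ∈ S, odot s y = some w}

/-- `y ⊙ S := {y ⊙ s : s ∈ S}`. -/
def odotRSet (odot : E → E → Option E) (y : E) (S : Set E) : Set E :=
  {w | ∃ s ∈ S, odot y s = some w}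

/-- Commutative unsharp residuated poset, axioms (C1)-(C4); `⊙` is a partial
operation encoded via `Option` and `→` maps pairs to subsets. -/
structure IsCURP (le : E → E → Prop) (odot : E → E → Option E) (imp : E → E → Set E)
    (compl : E → E) (zero one : E) : Prop where
  /-- (C1): bounded poset … -/
  le_refl : ∀ x, le x x
  le_antisymm : ∀ x y, le x y → le y x → x = y
  le_trans : ∀ x y z, le x y → le y z → le x z
  zero_le : ∀ x, le zero x
  le_one : ∀ x, le x one
  /-- (C1): … with an antitone involution. -/
  compl_compl : ∀ x, compl (compl x) = x
  compl_antitone : ∀ x y, le x y → le (compl y) (compl x)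
  /-- (C2): `x ⊙ y` is defined iff `x' ≤ y`. -/
  odot_defined : ∀ x y, (odot x y).isSome ↔ le (compl x) y
  /-- (C2): partial commutative monoid. -/
  odot_comm : ∀ x y, odot x y = odot y x
  odot_assoc : ∀ x y z, (odot x y).bind (fun u => odot u z) = (odot y z).bind (fun v => odot x v)
  odot_one : ∀ x, odot x one = some x
  one_odot : ∀ x, odot one x = some x
  /-- (C2): `z' ≤ x ≤ y` implies `x ⊙ z ≤ y ⊙ z`. -/
  odot_mono : ∀ x y z a b, le (compl z) x → le x y →
    odot x z = some a → odot y z = some b → le a b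
  /-- (C3): unsharp adjointness. -/
  adjoint : ∀ x y z,
    setLE le (lcone le (odotLSet odot (ucone le {x, compl y}) y))
      (ucone le (lcone le {y, z})) ↔
    setLE le (lcone le (ucone le {x, compl y})) (ucone le (imp y z))
  /-- (C4) -/
  imp_zero : ∀ x, imp x zero = {compl x}

/-- Divisibility: `x ≤ y` implies `y ⊙ (y → x) = L(x)`. -/
def CURPDivisible (le : E → E → Prop) (odot : E → E → Option E)
    (imp : E → E → Set E) : Prop :=
  ∀ x y, le x y → odotRSet odot y (imp y x) = lcone le {x}

/-- Pseudoeffect algebra axioms (P1)-(P4); `x̄ = lc x`, `x̃ = rc x`. -/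
structure IsPEA (add : E → E → Option E) (lc rc : E → E) (zero one : E) : Prop where
  /-- (P1): if `x + y` is defined then `u + x = x + y` for some `u` … -/
  exists_left : ∀ x y z, add x y = some z → ∃ u, add u x = some z
  /-- (P1): … and `y + w = x + y` for some `w`. -/
  exists_right : ∀ x y z, add x y = some z → ∃ w, add y w = some z
  /-- (P2) -/
  assoc : ∀ x y z, (add x y).bind (fun u => add u z) = (add y z).bind (fun v => add x v)
  /-- (P3): `x̄` is the unique `u` with `u + x = 1`. -/
  lc_iff : ∀ x u, add u x = some one ↔ u = lc x
  /-- (P3): `x̃` is the unique `w` with `x + w = 1`. -/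
  rc_iff : ∀ x w, add x w = some one ↔ w = rc x
  /-- (P4) -/
  one_add : ∀ x y, add one x = some y → x = zero
  add_one : ∀ x y, add x one = some y → x = zero

/-- A pseudoeffect algebra is good if `(x̄ + ȳ)˜ = (x̃ + ỹ)‾` whenever `x̃ ≤ y`. -/
def Good (add : E → E → Option E) (lc rc : E → E) : Prop :=
  ∀ x y, eaLe add (rc x) y →
    (add (lc x) (lc y)).map rc = (add (rc x) (rc y)).map lc

/-- A monotonous pseudoeffect algebra. -/
def PEAMonotonous (add : E → E → Option E) (lc rc : E → E) : Prop :=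
  (∀ (x : E) (A B : Set E), A.Nonempty → B.Nonempty →
    (∀ a ∈ A ∪ B, eaLe add a (lc x)) →
    setLE (eaLe add) (lcone (eaLe add) A) (ucone (eaLe add) B) →
    setLE (eaLe add) (lcone (eaLe add) (addRSet add A x))
      (ucone (eaLe add) (addRSet add B x))) ∧
  (∀ (x : E) (A B : Set E), A.Nonempty → B.Nonempty →
    (∀ a ∈ A ∪ B, eaLe add a (rc x)) →
    setLE (eaLe add) (lcone (eaLe add) A) (ucone (eaLe add) B) →
    setLE (eaLe add) (lcone (eaLe add) (addLSet add x A))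
      (ucone (eaLe add) (addLSet add x B)))

/-- The multiplication `x ⊙ y := (x̄ + ȳ)˜` derived from a pseudoeffect algebra. -/
def peaOdot (add : E → E → Option E) (lc rc : E → E) (x y : E) : Option E :=
  (add (lc x) (lc y)).map rc

/-- The implication `x → y := x̄ + L(x,y)` derived from a pseudoeffect algebra. -/
def peaImp (add : E → E → Option E) (lc : E → E) (x y : E) : Set E :=
  {z | ∃ c ∈ lcone (eaLe add) {x, y}, add (lc x) c = some z}

/-- The implication `x ⇝ y := L(x,y) + x̃` derived from a pseudoeffect algebra. -/
def peaImpW (add : E → E → Option E) (rc : E → E) (x y : E) : Set E :=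
  {z | ∃ c ∈ lcone (eaLe add) {x, y}, add c (rc x) = some z}

/-- Unsharp residuated poset, axioms (R1)-(R7); `x̄ = lc x`, `x̃ = rc x`. -/
structure IsURP (le : E → E → Prop) (odot : E → E → Option E)
    (imp impW : E → E → Set E) (lc rc : E → E) (zero one : E) : Prop where
  /-- (R1): bounded poset. -/
  le_refl : ∀ x, le x x
  le_antisymm : ∀ x y, le x y → le y x → x = y
  le_trans : ∀ x y z, le x y → le y z → le x z
  zero_le : ∀ x, le zero x
  le_one : ∀ x, le x one
  /-- (R2) -/
  rc_lc : ∀ x, rc (lc x) = x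
  lc_rc : ∀ x, lc (rc x) = x
  lc_antitone : ∀ x y, le x y → le (lc y) (lc x)
  rc_antitone : ∀ x y, le x y → le (rc y) (rc x)
  /-- (R3): `x ⊙ y` is defined iff `x̃ ≤ y`. -/
  odot_defined : ∀ x y, (odot x y).isSome ↔ le (rc x) y
  /-- (R3): partial monoid. -/
  odot_assoc : ∀ x y z, (odot x y).bind (fun u => odot u z) = (odot y z).bind (fun v => odot x v)
  odot_one : ∀ x, odot x one = some x
  one_odot : ∀ x, odot one x = some x
  /-- (R3): `z̄ ≤ x ≤ y` implies `x ⊙ z ≤ y ⊙ z`. -/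
  odot_rmono : ∀ x y z a b, le (lc z) x → le x y →
    odot x z = some a → odot y z = some b → le a b
  /-- (R3): `z̃ ≤ x ≤ y` implies `z ⊙ x ≤ z ⊙ y`. -/
  odot_lmono : ∀ x y z a b, le (rc z) x → le x y →
    odot z x = some a → odot z y = some b → le a b
  /-- (R4) -/
  adjoint_r : ∀ x y z,
    setLE le (lcone le (odotLSet odot (ucone le {x, lc y}) y))
      (ucone le (lcone le {y, z})) ↔
    setLE le (lcone le (ucone le {x, lc y})) (ucone le (imp y z))
  /-- (R5) -/
  adjoint_l : ∀ x y z,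
    setLE le (lcone le (odotRSet odot y (ucone le {x, rc y})))
      (ucone le (lcone le {y, z})) ↔
    setLE le (lcone le (ucone le {x, rc y})) (ucone le (impW y z))
  /-- (R6) -/
  imp_zero : ∀ x, imp x zero = {lc x}
  impW_zero : ∀ x, impW x zero = {rc x}
  /-- (R7) -/
  compat : ∀ x y, (odot (lc x) (lc y)).map rc = (odot (rc x) (rc y)).map lc

/-- Theorem 3 of the paper: a commutative unsharp residuated poset becomes an
effect algebra via `x + y := (x' ⊙ y')'` (defined iff `x ≤ y'`). -/
theorem stmt10 (le : E → E → Prop) (odot : E → E → Option E) (imp : E → E → Set E)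
    (compl : E → E) (zero one : E)
    (h : IsCURP le odot imp compl zero one) :
    IsEffectAlgebra (fun x y => (odot (compl x) (compl y)).map compl) compl zero one := by
  have compl_one : compl one = zero := by
    apply h.le_antisymm
    · have := h.compl_antitone _ _ (h.le_one (compl zero))
      rwa [h.compl_compl] at this
    · exact h.zero_le _
  have compl_zero : compl zero = one := by
    rw [← compl_one, h.compl_compl]
  -- key1 : x' ⊙ x = 0
  have key1 : ∀ y, odot (compl y) y = some zero := by
    intro y
    have hdef : (odot (compl y) y).isSome := by
      rw [h.odot_defined, h.compl_compl]; exact h.le_refl y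
    obtain ⟨c, hc⟩ := Option.isSome_iff_exists.mp hdef
    have hrhs : setLE le (lcone le (ucone le {zero, compl y})) (ucone le (imp y zero)) := by
      intro s hs t ht
      apply hs
      intro w hw
      rcases hw with hw | hw
      · subst hw; exact h.zero_le t
      · simp only [Set.mem_singleton_iff] at hw; subst hw
        apply ht; rw [h.imp_zero]; rfl
    have hlhs := (h.adjoint zero y zero).mpr hrhs
    have hcmem : c ∈ lcone le (odotLSet odot (ucone le {zero, compl y}) y) := by
      intro w hw
      obtain ⟨s, hs, hsw⟩ := hw
      exact h.odot_mono (compl y) s y c w (h.le_refl _) (hs (compl y) (by right; rfl)) hc hsw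
    have hc0 : le c zero := by
      apply hlhs c hcmem zero
      intro w hw
      exact hw zero (by right; rfl)
    rw [hc, h.le_antisymm c zero hc0 (h.zero_le c)]
  -- key2 : a ⊙ b = 0 → b = a'
  have key2 : ∀ a b, odot a b = some zero → b = compl a := by
    intro a b hab
    have hdef : le (compl a) b := by
      rw [← h.odot_defined]; exact Option.isSome_iff_exists.mpr ⟨zero, hab⟩
    have hba : le (compl b) a := by
      have := h.compl_antitone _ _ hdef
      rwa [h.compl_compl] at this
    have hlhs : setLE le (lcone le (odotLSet odot (ucone le {a, compl b}) b))
        (ucone le (lcone le {b, zero})) := by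
      intro s hs t _
      have hmem : zero ∈ odotLSet odot (ucone le {a, compl b}) b := by
        refine ⟨a, ?_, hab⟩
        intro w hw
        rcases hw with hw | hw
        · subst hw; exact h.le_refl _
        · simp only [Set.mem_singleton_iff] at hw; subst hw; exact hba
      have hs0 : le s zero := hs zero hmem
      exact h.le_trans s zero t hs0 (h.zero_le t)
    have hrhs := (h.adjoint a b zero).mp hlhs
    have hab' : le a (compl b) := by
      apply hrhs a (fun w hw => hw a (by left; rfl)) (compl b)
      intro w hw
      rw [h.imp_zero] at hw
      simp only [Set.mem_singleton_iff] at hw; subst hw; exact h.le_refl _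
    have : le b (compl a) := by
      have := h.compl_antitone _ _ hab'
      rwa [h.compl_compl] at this
    exact h.le_antisymm b (compl a) this hdef
  refine ⟨?_, ?_, ?_, ?_⟩
  · intro x y
    simp only [h.odot_comm (compl x) (compl y)]
  · intro x y z
    have H := h.odot_assoc (compl x) (compl y) (compl z)
    cases h1 : odot (compl x) (compl y) with
    | none =>
      cases h2 : odot (compl y) (compl z) with
      | none => simp [h1, h2]
      | some b =>
        rw [h1, h2] at H
        simp only [Option.bind_none, Option.bind_some] at H
        simp [h1, h2, h.compl_compl, ← H]
    | some a =>
      cases h2 : odot (compl y) (compl z) with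
      | none =>
        rw [h1, h2] at H
        simp only [Option.bind_none, Option.bind_some] at H
        simp [h1, h2, h.compl_compl, H]
      | some b =>
        rw [h1, h2] at H
        simp only [Option.bind_some] at H
        simp [h1, h2, h.compl_compl, H]
  · intro x u
    constructor
    · intro hxu
      simp only [Option.map_eq_some_iff] at hxu
      obtain ⟨a, ha, hone⟩ := hxu
      have : a = zero := by
        have := congrArg compl hone
        rwa [h.compl_compl, compl_one] at this
      subst this
      have := key2 _ _ ha
      have := congrArg compl this
      rw [h.compl_compl, h.compl_compl] at this
      exact this
    · intro hu
      subst hu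
      show Option.map compl (odot (compl x) (compl (compl x))) = some one
      rw [h.compl_compl, key1, Option.map_some, compl_zero]
  · intro x y hxy
    have hdef : (odot (compl one) (compl x)).isSome := by
      have : (Option.map compl (odot (compl one) (compl x))).isSome := by rw [hxy]; rfl
      simpa using this
    rw [h.odot_defined, compl_one, compl_zero] at hdef
    have : compl x = one := h.le_antisymm _ _ (h.le_one _) hdef
    have := congrArg compl this
    rwa [h.compl_compl, compl_one] at this


end Paper
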